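/- arXiv:2204.01581 — 4 statements merged into one kernel-verified Lean document; each statement's English description precedes it below -/
import Mathlib

section
/- Let q, r, N ∈ ℕ with gcd(q, r) = 1 and let k ∈ ℤ. Let q', r' ∈ ℕ satisfy r r' ≡ 1 (mod q) and q q' ≡ 1 (mod r), and write N = Q q r + R with Q, R nonnegative integers and 0 ≤ R < q r. For 1 ≤ t ≤ r define ν_N(t,k) = 1 if there exists an integer n with 1 ≤ n ≤ R and n ≡ k r' r + t q' q (mod q r), and ν_N(t,k) = 0 otherwise. Then S_N(q,k;r) = ∑_{t=1}^{r} c_r(t) (⌊N/(qr)⌋ + ν_N(t,k)); moreover this equals ⌊N/q⌋ + ν_N(1,k) if r = 1, and equals ∑_{t=1}^{r} c_r(t) ν_N(t,k) if r ≥ 2. -/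
open Finset

/-- The Ramanujan sum `c_q(n) = ∑_{1 ≤ j ≤ q, gcd(j,q)=1} exp(2πi j n / q)`. -/
noncomputable def cq (q : ℕ) (n : ℤ) : ℂ :=
  ∑ j ∈ (Finset.Icc 1 q).filter (fun j => Nat.Coprime j q),
    Complex.exp (2 * Real.pi * Complex.I * j * n / q)

/-- The incomplete von Mangoldt function `Λ_N(n) = -∑_{d ≤ N, d ∣ n} μ(d) log d`. -/
noncomputable def LamN (N n : ℕ) : ℝ :=
  -∑ d ∈ (Finset.Icc 1 N).filter (fun d => d ∣ n),
    (ArithmeticFunction.moebius d : ℝ) * Real.log d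

/-- The correlation `C_{Λ,Λ_N}(N, n) = ∑_{m ≤ N} Λ(m) Λ_N(m + n)`. -/
noncomputable def corr (N n : ℕ) : ℝ :=
  ∑ m ∈ Finset.Icc 1 N, ArithmeticFunction.vonMangoldt m * LamN N (m + n)

/-- The Ramanujan coefficient `Λ̂_N(q) = -(μ(q)/q) ∑_{d ≤ N/q, gcd(d,q)=1} μ(d) log(dq)/d`. -/
noncomputable def LamHat (N q : ℕ) : ℝ :=
  -((ArithmeticFunction.moebius q : ℝ) / q) *
    ∑ d ∈ (Finset.Icc 1 (N / q)).filter (fun d => Nat.Coprime d q),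
      (ArithmeticFunction.moebius d : ℝ) * Real.log (d * q) / d

/-- `ℤ_q^* = {m ∈ ℕ ∩ [1,q] : gcd(m,q) = 1}`. -/
def Zstar (q : ℕ) : Finset ℕ := (Finset.Icc 1 q).filter (fun m => Nat.Coprime m q)

/-- `ψ(N; q, k) = ∑_{n ≤ N, n ≡ k (mod q)} Λ(n)`. -/
noncomputable def psi (N q k : ℕ) : ℝ :=
  ∑ n ∈ (Finset.Icc 1 N).filter (fun n => n % q = k % q),
    ArithmeticFunction.vonMangoldt n

/-- `δ(h; q, k) = c_q(k+h) - (μ(q)/φ(q)) c_q(h)`. -/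
noncomputable def dev (h q k : ℕ) : ℂ :=
  cq q ((k : ℤ) + h) - (ArithmeticFunction.moebius q : ℂ) / (Nat.totient q : ℂ) * cq q h

/-- `Δ(N, h) = ∑_{q ≤ N} Λ̂_N(q) ∑_{k ∈ ℤ_q^*} ψ(N;q,k) δ(h;q,k)`. -/
noncomputable def Delta (N h : ℕ) : ℂ :=
  ∑ q ∈ Finset.Icc 1 N, (LamHat N q : ℂ) *
    ∑ k ∈ Zstar q, (psi N q k : ℂ) * dev h q k

/-- `S_N(q, k; r) = ∑_{n ≤ N, n ≡ k (mod q)} c_r(n)`. -/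
noncomputable def SN (N q : ℕ) (k : ℤ) (r : ℕ) : ℂ :=
  ∑ n ∈ (Finset.Icc 1 N).filter (fun n : ℕ => (n : ℤ) % (q : ℤ) = k % (q : ℤ)), cq r n

/-- Periodicity of the Ramanujan sum in its argument. -/
lemma cq_periodic (r : ℕ) (hr : 0 < r) (m n : ℤ) (h : (r:ℤ) ∣ m - n) : cq r m = cq r n := by
  unfold cq
  refine Finset.sum_congr rfl fun j _ => ?_
  obtain ⟨c, hc⟩ := h
  have hrC : (r:ℂ) ≠ 0 := Nat.cast_ne_zero.mpr hr.ne'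
  have h1 : (m:ℂ) - n = (r:ℂ) * c := by exact_mod_cast congrArg (Int.cast : ℤ → ℂ) hc
  have hexp : 2 * (Real.pi:ℂ) * Complex.I * j * m / r
      = 2 * (Real.pi:ℂ) * Complex.I * j * n / r + ((j:ℤ) * c : ℤ) * (2 * Real.pi * Complex.I) := by
    field_simp
    push_cast
    linear_combination (j:ℂ) * h1
  rw [hexp, Complex.exp_add, Complex.exp_int_mul_two_pi_mul_I, mul_one]

lemma cq_one (n : ℤ) : cq 1 n = 1 := by
  unfold cq
  rw [show (Finset.Icc 1 1).filter (fun j => Nat.Coprime j 1) = {1} by decide]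
  rw [Finset.sum_singleton]
  have : 2 * (Real.pi:ℂ) * Complex.I * (1:ℕ) * n / (1:ℕ) = (n:ℤ) * (2 * Real.pi * Complex.I) := by
    push_cast; ring
  rw [this, Complex.exp_int_mul_two_pi_mul_I]

lemma cq_sum_zero (r : ℕ) (hr : 2 ≤ r) : ∑ t ∈ Finset.Icc 1 r, cq r (t:ℤ) = 0 := by
  unfold cq
  rw [Finset.sum_comm]
  refine Finset.sum_eq_zero fun j hj => ?_
  simp only [Finset.mem_filter, Finset.mem_Icc] at hj
  obtain ⟨⟨hj1, hj2⟩, hjc⟩ := hj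
  have hjr : j < r := by
    rcases Nat.lt_or_ge j r with h | h
    · exact h
    · exfalso
      have : j = r := le_antisymm hj2 h
      subst this
      simp [Nat.Coprime] at hjc
      omega
  have hrC : (r:ℂ) ≠ 0 := Nat.cast_ne_zero.mpr (by omega)
  set z : ℂ := Complex.exp (2 * Real.pi * Complex.I * j / r) with hz
  have hterm : ∀ t : ℕ, Complex.exp (2 * (Real.pi:ℂ) * Complex.I * j * (t:ℤ) / r) = z ^ t := by
    intro t
    rw [hz, ← Complex.exp_nat_mul]
    congr 1
    push_cast
    ring
  have hzr : z ^ r = 1 := by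
    rw [hz, ← Complex.exp_nat_mul]
    have : (r:ℂ) * (2 * Real.pi * Complex.I * j / r) = (j:ℤ) * (2 * Real.pi * Complex.I) := by
      field_simp
      push_cast
      ring
    rw [this, Complex.exp_int_mul_two_pi_mul_I]
  have hz1 : z ≠ 1 := by
    intro h
    rw [hz, Complex.exp_eq_one_iff] at h
    obtain ⟨m, hm⟩ := h
    have hπ : (Real.pi:ℂ) ≠ 0 := Complex.ofReal_ne_zero.mpr Real.pi_ne_zero
    have hI : Complex.I ≠ 0 := Complex.I_ne_zero
    have hjm : (j:ℤ) = m * r := by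
      have h2 : (j:ℂ) = (m:ℂ) * r := by
        field_simp at hm
        have h3 : (2 * (Real.pi:ℂ) * Complex.I) * (j:ℂ)
            = (2 * (Real.pi:ℂ) * Complex.I) * ((m:ℂ) * r) := by
          linear_combination (2 * (Real.pi:ℂ) * Complex.I) * hm
        exact mul_left_cancel₀ (by simp [hπ, hI]) h3
      exact_mod_cast h2
    have hj1' : (1:ℤ) ≤ (j:ℤ) := by exact_mod_cast hj1
    have hjr' : (j:ℤ) < (r:ℤ) := by exact_mod_cast hjr
    have hr0 : (0:ℤ) < (r:ℤ) := by exact_mod_cast (by omega : 0 < r)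
    have hm1 : 1 ≤ m := by
      by_contra hcon
      push_neg at hcon
      have hm0 : m ≤ 0 := by omega
      nlinarith
    nlinarith
  calc ∑ t ∈ Finset.Icc 1 r, Complex.exp (2 * (Real.pi:ℂ) * Complex.I * j * (t:ℤ) / r)
      = ∑ t ∈ Finset.Icc 1 r, z ^ t := Finset.sum_congr rfl fun t _ => hterm t
    _ = ∑ i ∈ Finset.range r, z ^ (1 + i) := by
        rw [← Finset.Ico_add_one_right_eq_Icc, Finset.sum_Ico_eq_sum_range]
        simp
    _ = z * ∑ i ∈ Finset.range r, z ^ i := by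
        rw [Finset.mul_sum]
        exact Finset.sum_congr rfl fun i _ => by rw [pow_add, pow_one]
    _ = z * ((z ^ r - 1) / (z - 1)) := by rw [geom_sum_eq hz1]
    _ = 0 := by rw [hzr]; simp

lemma resid_unique (M : ℕ) (a : ℤ) (L : ℕ) (n : ℕ)
    (h1 : L < n) (h2 : n ≤ L + M) (h3 : (n:ℤ) % M = a % M) :
    (n:ℤ) = (L:ℤ) + 1 + (a - ((L:ℤ)+1)) % M := by
  have hmod : ((n:ℤ) - ((L:ℤ)+1)) % M = (a - ((L:ℤ)+1)) % M :=
    Int.ModEq.sub_right _ h3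
  have heq : ((n:ℤ) - ((L:ℤ)+1)) % M = (n:ℤ) - ((L:ℤ)+1) :=
    Int.emod_eq_of_lt (by omega) (by push_cast; omega)
  rw [heq] at hmod
  linarith [hmod]

lemma block_card (M : ℕ) (hM : 0 < M) (a : ℤ) (L : ℕ) :
    ((Finset.Ioc L (L+M)).filter (fun n : ℕ => (n:ℤ) % M = a % M)).card = 1 := by
  have hMZ : (0:ℤ) < M := by exact_mod_cast hM
  set b : ℤ := (a - ((L:ℤ)+1)) % M with hb
  have hb0 : 0 ≤ b := Int.emod_nonneg _ hMZ.ne'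
  have hbM : b < M := Int.emod_lt_of_pos _ hMZ
  rw [Finset.card_eq_one]
  refine ⟨L + 1 + b.toNat, ?_⟩
  have hcast : ((L + 1 + b.toNat : ℕ) : ℤ) = (L:ℤ) + 1 + b := by
    push_cast [Int.toNat_of_nonneg hb0]; ring
  ext n
  simp only [Finset.mem_filter, Finset.mem_Ioc, Finset.mem_singleton]
  constructor
  · rintro ⟨⟨hn1, hn2⟩, hn3⟩
    have := resid_unique M a L n hn1 hn2 hn3
    omega
  · rintro rfl
    refine ⟨⟨by omega, by omega⟩, ?_⟩
    rw [hcast]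
    have : ((L:ℤ) + 1 + b) % M = ((L:ℤ) + 1 + (a - ((L:ℤ)+1))) % M := by
      rw [hb, Int.add_emod, Int.emod_emod_of_dvd _ dvd_rfl, ← Int.add_emod]
    rw [this]
    congr 1
    ring

lemma strip_card (M : ℕ) (hM : 0 < M) (a : ℤ) :
    ∀ (Qn L : ℕ), ((Finset.Ioc L (L + Qn*M)).filter (fun n : ℕ => (n:ℤ) % M = a % M)).card = Qn := by
  intro Qn
  induction Qn with
  | zero => intro L; simp
  | succ Q ih =>
    intro L
    have hsplit : Finset.Ioc L (L + (Q+1)*M)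
        = Finset.Ioc L (L + Q*M) ∪ Finset.Ioc (L + Q*M) (L + Q*M + M) := by
      rw [Finset.Ioc_union_Ioc_eq_Ioc (by omega) (by omega)]
      congr 1
      ring
    have hdisj : Disjoint ((Finset.Ioc L (L + Q*M)).filter (fun n : ℕ => (n:ℤ) % M = a % M))
        ((Finset.Ioc (L + Q*M) (L + Q*M + M)).filter (fun n : ℕ => (n:ℤ) % M = a % M)) := by
      simp only [Finset.disjoint_left, Finset.mem_filter, Finset.mem_Ioc]
      rintro x ⟨⟨_, h2⟩, _⟩ ⟨⟨h3, _⟩, _⟩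
      omega
    rw [hsplit, Finset.filter_union, Finset.card_union_of_disjoint hdisj, ih, block_card M hM a]

lemma count_card (M : ℕ) (hM : 0 < M) (a : ℤ) (Q R : ℕ) :
    ((Finset.Icc 1 (Q*M+R)).filter (fun n : ℕ => (n:ℤ) % M = a % M)).card
      = Q + ((Finset.Icc 1 R).filter (fun n : ℕ => (n:ℤ) % M = a % M)).card := by
  have h1 : Finset.Icc 1 (Q*M+R) = Finset.Ioc 0 (Q*M+R) := Finset.Icc_add_one_left_eq_Ioc 0 _
  have h2 : Finset.Icc 1 R = Finset.Ioc 0 R := Finset.Icc_add_one_left_eq_Ioc 0 _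
  rw [h1, h2]
  have hsplit : Finset.Ioc 0 (Q*M+R) = Finset.Ioc 0 R ∪ Finset.Ioc R (R + Q*M) := by
    rw [Finset.Ioc_union_Ioc_eq_Ioc (by omega) (by omega)]
    congr 1
    omega
  have hdisj : Disjoint ((Finset.Ioc 0 R).filter (fun n : ℕ => (n:ℤ) % M = a % M))
      ((Finset.Ioc R (R + Q*M)).filter (fun n : ℕ => (n:ℤ) % M = a % M)) := by
    simp only [Finset.disjoint_left, Finset.mem_filter, Finset.mem_Ioc]
    rintro x ⟨⟨_, h2⟩, _⟩ ⟨⟨h3, _⟩, _⟩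
    omega
  rw [hsplit, Finset.filter_union, Finset.card_union_of_disjoint hdisj, strip_card M hM a Q R]
  omega

/-- the exact evaluation of `S_N(q,k;r)` for `gcd(q,r)=1` via
the Chinese remainder theorem. -/
theorem stmt16 (q r N : ℕ) (hq : 1 ≤ q) (hr : 1 ≤ r) (hN : 1 ≤ N)
    (hqr : Nat.Coprime q r) (k : ℤ) (q' r' : ℕ)
    (hr' : r * r' ≡ 1 [MOD q]) (hq' : q * q' ≡ 1 [MOD r])
    (Q R : ℕ) (hNQR : N = Q * q * r + R) (hRlt : R < q * r)
    (ν : ℕ → ℕ)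
    (hν1 : ∀ t : ℕ, (∃ n : ℤ, 1 ≤ n ∧ n ≤ (R : ℤ) ∧
      ((q : ℤ) * r) ∣ (n - (k * r' * r + t * q' * q))) → ν t = 1)
    (hν0 : ∀ t : ℕ, ¬ (∃ n : ℤ, 1 ≤ n ∧ n ≤ (R : ℤ) ∧
      ((q : ℤ) * r) ∣ (n - (k * r' * r + t * q' * q))) → ν t = 0) :
    SN N q k r = ∑ t ∈ Finset.Icc 1 r, cq r (t : ℤ) * ((Q : ℂ) + (ν t : ℂ)) ∧
    (r = 1 → SN N q k r = ((N / q : ℕ) : ℂ) + (ν 1 : ℂ)) ∧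
    (2 ≤ r → SN N q k r = ∑ t ∈ Finset.Icc 1 r, cq r (t : ℤ) * (ν t : ℂ)) := by
  have hM : 0 < q * r := Nat.mul_pos hq hr
  have hMcast : ((q * r : ℕ) : ℤ) = (q:ℤ) * r := by push_cast; ring
  set aT : ℕ → ℤ := fun t => k * r' * r + t * q' * q with haT
  -- a_t ≡ k (mod q)
  have hak : ∀ t : ℕ, aT t ≡ k [ZMOD (q:ℤ)] := by
    intro t
    have hd : (q:ℤ) ∣ (1 - (r:ℤ) * r') := by
      have h := hr'.dvd
      push_cast at h
      obtain ⟨c, hc⟩ := h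
      exact ⟨c, by linarith [hc]⟩
    obtain ⟨c, hc⟩ := hd
    refine Int.modEq_iff_dvd.mpr ⟨k * c - t * q', ?_⟩
    simp only [haT]
    linear_combination k * hc
  -- a_t ≡ t (mod r)
  have hat : ∀ t : ℕ, aT t ≡ (t:ℤ) [ZMOD (r:ℤ)] := by
    intro t
    have hd : (r:ℤ) ∣ (1 - (q:ℤ) * q') := by
      have h := hq'.dvd
      push_cast at h
      obtain ⟨c, hc⟩ := h
      exact ⟨c, by linarith [hc]⟩
    obtain ⟨c, hc⟩ := hd
    refine Int.modEq_iff_dvd.mpr ⟨t * c - k * r', ?_⟩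
    simp only [haT]
    linear_combination (t:ℤ) * hc
  have hcop : Int.gcd (q:ℤ) (r:ℤ) = 1 := by
    rw [Int.gcd_natCast_natCast]; exact hqr
  -- the CRT equivalence
  have hcrt : ∀ (t : ℕ) (n : ℤ),
      (n % (q:ℤ) = k % (q:ℤ) ∧ n % (r:ℤ) = (t:ℤ) % (r:ℤ)) ↔
      n % ((q:ℤ) * r) = aT t % ((q:ℤ) * r) := by
    intro t n
    constructor
    · rintro ⟨h1, h2⟩
      exact (Int.modEq_and_modEq_iff_modEq_mul hcop).mp
        ⟨(Int.ModEq.trans h1 (hak t).symm), (Int.ModEq.trans h2 (hat t).symm)⟩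
    · intro h
      obtain ⟨e1, e2⟩ := (Int.modEq_and_modEq_iff_modEq_mul hcop).mpr h
      exact ⟨e1.trans (hak t), e2.trans (hat t)⟩
  -- cardinality of each fiber
  have hcard : ∀ t : ℕ,
      ((Finset.Icc 1 N).filter
        (fun n : ℕ => (n:ℤ) % (q:ℤ) = k % (q:ℤ) ∧ (n:ℤ) % (r:ℤ) = (t:ℤ) % (r:ℤ))).card
      = Q + ν t := by
    intro t
    have hpred : ((Finset.Icc 1 N).filter
        (fun n : ℕ => (n:ℤ) % (q:ℤ) = k % (q:ℤ) ∧ (n:ℤ) % (r:ℤ) = (t:ℤ) % (r:ℤ)))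
        = (Finset.Icc 1 N).filter
          (fun n : ℕ => (n:ℤ) % ((q*r : ℕ):ℤ) = aT t % ((q*r : ℕ):ℤ)) := by
      apply Finset.filter_congr
      intro n _
      rw [hMcast]
      exact hcrt t (n:ℤ)
    have hN' : N = Q * (q*r) + R := by rw [hNQR]; ring
    rw [hpred, hN', count_card (q*r) hM (aT t) Q R]
    congr 1
    by_cases hex : ∃ n : ℤ, 1 ≤ n ∧ n ≤ (R : ℤ) ∧
        ((q : ℤ) * r) ∣ (n - (k * r' * r + t * q' * q))
    · rw [hν1 t hex]
      obtain ⟨n, hn1, hn2, hnd⟩ := hex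
      have hmem : n.toNat ∈ (Finset.Icc 1 R).filter
          (fun m : ℕ => (m:ℤ) % ((q*r : ℕ):ℤ) = aT t % ((q*r : ℕ):ℤ)) := by
        simp only [Finset.mem_filter, Finset.mem_Icc]
        refine ⟨⟨by omega, by omega⟩, ?_⟩
        have hcast : ((n.toNat : ℕ) : ℤ) = n := Int.toNat_of_nonneg (by omega)
        rw [hcast, hMcast]
        exact Int.modEq_iff_dvd.mpr (dvd_sub_comm.mp hnd)
      have hpos : 0 < ((Finset.Icc 1 R).filter
          (fun m : ℕ => (m:ℤ) % ((q*r : ℕ):ℤ) = aT t % ((q*r : ℕ):ℤ))).card :=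
        Finset.card_pos.mpr ⟨_, hmem⟩
      have hle : ((Finset.Icc 1 R).filter
          (fun m : ℕ => (m:ℤ) % ((q*r : ℕ):ℤ) = aT t % ((q*r : ℕ):ℤ))).card ≤ 1 := by
        refine Finset.card_le_one.mpr fun a ha b hb => ?_
        simp only [Finset.mem_filter, Finset.mem_Icc] at ha hb
        have e1 := resid_unique (q*r) (aT t) 0 a (by omega) (by omega) ha.2
        have e2 := resid_unique (q*r) (aT t) 0 b (by omega) (by omega) hb.2
        omega
      omega
    · rw [hν0 t hex]
      rw [Finset.card_eq_zero, Finset.filter_eq_empty_iff]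
      intro m hm hcon
      simp only [Finset.mem_Icc] at hm
      apply hex
      refine ⟨(m:ℤ), by exact_mod_cast hm.1, by exact_mod_cast hm.2, ?_⟩
      rw [hMcast] at hcon
      exact dvd_sub_comm.mp (Int.ModEq.dvd hcon)
  -- fiber decomposition of the sum
  set g : ℕ → ℕ := fun n => if n % r = 0 then r else n % r with hg
  have hmaps : ∀ n ∈ (Finset.Icc 1 N).filter
      (fun n : ℕ => (n : ℤ) % (q : ℤ) = k % (q : ℤ)), g n ∈ Finset.Icc 1 r := by
    intro n _
    simp only [hg, Finset.mem_Icc]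
    have : n % r < r := Nat.mod_lt _ (by omega)
    split_ifs <;> omega
  have hgeq : ∀ t ∈ Finset.Icc 1 r, ∀ n : ℕ,
      (g n = t ↔ (n:ℤ) % (r:ℤ) = (t:ℤ) % (r:ℤ)) := by
    intro t ht n
    simp only [Finset.mem_Icc] at ht
    have hcast : ((n:ℤ) % (r:ℤ) = (t:ℤ) % (r:ℤ)) ↔ n % r = t % r := by
      constructor <;> intro h <;> exact_mod_cast h
    rw [hcast]
    have hmlt : n % r < r := Nat.mod_lt _ (by omega)
    have htr : t % r = if t = r then 0 else t := by
      split_ifs with h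
      · rw [h]; exact Nat.mod_self r
      · exact Nat.mod_eq_of_lt (by omega)
    simp only [hg, htr]
    split_ifs <;> omega
  have hkey : SN N q k r = ∑ t ∈ Finset.Icc 1 r, (Q + ν t) • cq r (t:ℤ) := by
    unfold SN
    rw [← Finset.sum_fiberwise_of_maps_to hmaps (fun n => cq r (n:ℤ))]
    refine Finset.sum_congr rfl fun t ht => ?_
    have hfib : ((Finset.Icc 1 N).filter
          (fun n : ℕ => (n : ℤ) % (q : ℤ) = k % (q : ℤ))).filter (fun n => g n = t)
        = (Finset.Icc 1 N).filter
          (fun n : ℕ => (n:ℤ) % (q:ℤ) = k % (q:ℤ) ∧ (n:ℤ) % (r:ℤ) = (t:ℤ) % (r:ℤ)) := by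
      rw [Finset.filter_filter]
      apply Finset.filter_congr
      intro n _
      exact and_congr_right fun _ => hgeq t ht n
    rw [hfib]
    have hterm : ∀ n ∈ (Finset.Icc 1 N).filter
        (fun n : ℕ => (n:ℤ) % (q:ℤ) = k % (q:ℤ) ∧ (n:ℤ) % (r:ℤ) = (t:ℤ) % (r:ℤ)),
        cq r (n:ℤ) = cq r (t:ℤ) := by
      intro n hn
      simp only [Finset.mem_filter] at hn
      exact cq_periodic r (by omega) (n:ℤ) (t:ℤ) (dvd_sub_comm.mp (Int.ModEq.dvd hn.2.2))
    rw [Finset.sum_congr rfl hterm, Finset.sum_const, hcard t]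
  have main : SN N q k r = ∑ t ∈ Finset.Icc 1 r, cq r (t : ℤ) * ((Q : ℂ) + (ν t : ℂ)) := by
    rw [hkey]
    refine Finset.sum_congr rfl fun t _ => ?_
    rw [nsmul_eq_mul]
    push_cast
    ring
  refine ⟨main, ?_, ?_⟩
  · intro hr1
    subst hr1
    rw [main]
    rw [show Finset.Icc 1 1 = ({1} : Finset ℕ) by decide, Finset.sum_singleton, cq_one]
    have hQ : N / q = Q := by
      have hNe : N = R + q * Q := by rw [hNQR]; ring
      have hRq : R < q := by simpa using hRlt
      rw [hNe, Nat.add_mul_div_left _ _ (by omega : 0 < q), Nat.div_eq_of_lt hRq, Nat.zero_add]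
    rw [hQ]
    push_cast
    ring
  · intro hr2
    rw [main]
    have hsplit : ∑ t ∈ Finset.Icc 1 r, cq r (t : ℤ) * ((Q : ℂ) + (ν t : ℂ))
        = (Q:ℂ) * ∑ t ∈ Finset.Icc 1 r, cq r (t:ℤ)
          + ∑ t ∈ Finset.Icc 1 r, cq r (t : ℤ) * (ν t : ℂ) := by
      rw [Finset.mul_sum, ← Finset.sum_add_distrib]
      refine Finset.sum_congr rfl fun t _ => ?_
      ring
    rw [hsplit, cq_sum_zero r hr2]
    ring
end

section
/- Let q, r ∈ ℕ with gcd(q, r) = 1 and r ≥ 2, and let k ∈ ℤ. Then for all N₁, N₂ ∈ ℕ with N₁ ≡ N₂ (mod q r) one has S_{N₁}(q,k;r) = S_{N₂}(q,k;r). -/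
open Finset

lemma cq_block_zero (q r : ℕ) (hr : 2 ≤ r) (hqr : Nat.Coprime q r) (M : ℕ) :
    ∑ t ∈ Finset.range r, cq r ((M : ℤ) + t * q) = 0 := by
  unfold cq
  rw [Finset.sum_comm]
  refine Finset.sum_eq_zero fun j hj => ?_
  simp only [Finset.mem_filter, Finset.mem_Icc] at hj
  obtain ⟨⟨hj1, hjr⟩, hjc⟩ := hj
  have hrz : (r : ℂ) ≠ 0 := by
    simp only [ne_eq, Nat.cast_eq_zero]; omega
  set z : ℂ := Complex.exp (2 * Real.pi * Complex.I * j * q / r) with hz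
  have hterm : ∀ t ∈ Finset.range r,
      Complex.exp (2 * Real.pi * Complex.I * j * ((M:ℂ) + t*q) / r)
      = Complex.exp (2 * Real.pi * Complex.I * j * M / r) * z ^ t := by
    intro t _
    rw [hz, ← Complex.exp_nat_mul, ← Complex.exp_add]
    congr 1
    field_simp
  push_cast
  rw [Finset.sum_congr rfl hterm, ← Finset.mul_sum]
  have hz1 : z ≠ 1 := by
    intro h1
    rw [hz, Complex.exp_eq_one_iff] at h1
    obtain ⟨m, hm⟩ := h1
    have hπ : (Real.pi : ℂ) ≠ 0 := by
      simpa using Real.pi_ne_zero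
    have h2πI : (2 * (Real.pi:ℂ) * Complex.I) ≠ 0 := by
      simp [Real.pi_ne_zero, Complex.I_ne_zero]
    have h2 : ((j : ℂ) * q) = m * r := by
      field_simp at hm
      apply mul_left_cancel₀ h2πI
      linear_combination (2 * (Real.pi:ℂ) * Complex.I) * hm
    have h3 : ((j * q : ℕ) : ℤ) = m * r := by exact_mod_cast h2
    have h4 : (r : ℤ) ∣ ((j * q : ℕ) : ℤ) := ⟨m, by linarith [h3]⟩
    have h5 : r ∣ j * q := by exact_mod_cast h4
    have h6 : r ∣ j := (Nat.Coprime.dvd_of_dvd_mul_right (Nat.Coprime.symm hqr) h5)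
    have h7 : r ≤ j := Nat.le_of_dvd (by omega) h6
    have : j = r := by omega
    rw [this, Nat.Coprime, Nat.gcd_self] at hjc
    omega
  rw [geom_sum_eq hz1]
  have hzr : z ^ r = 1 := by
    rw [hz, ← Complex.exp_nat_mul]
    have : (r:ℂ) * (2 * Real.pi * Complex.I * j * q / r) = ((j*q : ℤ) : ℂ) * (2 * Real.pi * Complex.I) := by
      push_cast; field_simp
    rw [this, Complex.exp_int_mul_two_pi_mul_I]
  rw [hzr]
  simp

lemma filter_block (q r N b : ℕ) (hq : 1 ≤ q) (hb : b < q) :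
    (Finset.Ioc N (N + q*r)).filter (fun n => n % q = b)
      = (Finset.range r).image (fun t => N + 1 + (b + q - (N+1) % q) % q + q * t) := by
  set a := (b + q - (N+1) % q) % q with ha_def
  have ha : a < q := Nat.mod_lt _ hq
  have hs : (N+1) % q < q := Nat.mod_lt _ hq
  have hn0 : (N + 1 + a) % q = b := by
    calc (N + 1 + a) % q = ((N+1) % q + a % q) % q := Nat.add_mod _ _ _
      _ = ((N+1) % q + a) % q := by rw [Nat.mod_eq_of_lt ha]
      _ = ((N+1) % q % q + (b + q - (N+1) % q) % q) % q := by
            rw [Nat.mod_mod_of_dvd _ dvd_rfl, ha_def]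
      _ = ((N+1) % q + (b + q - (N+1) % q)) % q := (Nat.add_mod _ _ _).symm
      _ = (b + q) % q := by congr 1; omega
      _ = b := by rw [Nat.add_mod_right, Nat.mod_eq_of_lt hb]
  ext n
  simp only [Finset.mem_filter, Finset.mem_Ioc, Finset.mem_image, Finset.mem_range]
  constructor
  · rintro ⟨⟨h1, h2⟩, h3⟩
    have he : N + 1 + (n - (N+1)) = n := by omega
    set d := n - (N+1) with hd_def
    have hmeq : d ≡ a [MOD q] := by
      have h4 : N + 1 + d ≡ N + 1 + a [MOD q] := by
        unfold Nat.ModEq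
        rw [he, hn0, h3]
      exact Nat.ModEq.add_left_cancel' (N+1) h4
    have hda : d % q = a := by
      rw [Nat.ModEq] at hmeq; rw [hmeq, Nat.mod_eq_of_lt ha]
    have hale : a ≤ d := hda ▸ Nat.mod_le d q
    obtain ⟨t, ht⟩ := (Nat.modEq_iff_dvd' hale).mp hmeq.symm
    refine ⟨t, ?_, by omega⟩
    have hlt : q * t < q * r := by omega
    exact Nat.lt_of_mul_lt_mul_left hlt
  · rintro ⟨t, htr, rfl⟩
    have h2 : q * (t+1) ≤ q * r := Nat.mul_le_mul_left q htr
    have h3 : q * (t+1) = q*t + q := by ring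
    refine ⟨⟨by omega, by omega⟩, ?_⟩
    rw [show N+1+a+q*t = (N+1+a) + t * q by ring, Nat.add_mul_mod_self_right, hn0]

lemma SN_step (q r : ℕ) (hq : 1 ≤ q) (hr : 2 ≤ r) (hqr : Nat.Coprime q r) (k : ℤ) (N : ℕ) :
    SN (N + q * r) q k r = SN N q k r := by
  unfold SN
  have hqz : (0:ℤ) < (q:ℤ) := by exact_mod_cast hq
  have hb0 : (0:ℤ) ≤ k % q := Int.emod_nonneg k (by omega)
  set b : ℕ := (k % q).toNat with hbdef
  have hbq : (b:ℤ) = k % q := Int.toNat_of_nonneg hb0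
  have hb : b < q := by
    have := Int.emod_lt_of_pos k hqz
    omega
  have hcond : ∀ n : ℕ, ((n:ℤ) % q = k % q) ↔ n % q = b := by
    intro n
    rw [← hbq, ← Int.natCast_mod, Nat.cast_inj]
  have hfilt : ∀ M : ℕ, (Finset.Icc 1 M).filter (fun n : ℕ => (n:ℤ) % q = k % q)
      = (Finset.Ioc 0 M).filter (fun n => n % q = b) := by
    intro M
    rw [← Finset.Icc_add_one_left_eq_Ioc]
    exact Finset.filter_congr fun n _ => by simpa using hcond n
  rw [hfilt, hfilt, Finset.sum_filter, Finset.sum_filter,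
    ← Finset.sum_Ioc_consecutive (fun n : ℕ => if n % q = b then cq r n else 0)
      (Nat.zero_le N) (Nat.le_add_right N (q*r))]
  have hzero : ∑ n ∈ Finset.Ioc N (N + q*r), (if n % q = b then cq r (n:ℤ) else 0) = 0 := by
    rw [← Finset.sum_filter, filter_block q r N b hq hb, Finset.sum_image (by
      intro x _ y _ hxy
      have : q * x = q * y := by simp only at hxy; omega
      exact Nat.eq_of_mul_eq_mul_left hq this)]
    rw [← cq_block_zero q r hr hqr (N + 1 + (b + q - (N+1) % q) % q)]
    apply Finset.sum_congr rfl
    intro t _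
    congr 1
    push_cast
    ring
  rw [hzero, add_zero]

/-- `S_N(q,k;r)` only depends on `N mod qr` (for `gcd(q,r)=1`, `r ≥ 2`). -/
theorem stmt17 (q r : ℕ) (hq : 1 ≤ q) (hr : 2 ≤ r) (hqr : Nat.Coprime q r) (k : ℤ)
    (N₁ N₂ : ℕ) (hN₁ : 1 ≤ N₁) (hN₂ : 1 ≤ N₂) (h : N₁ ≡ N₂ [MOD q * r]) :
    SN N₁ q k r = SN N₂ q k r := by
  have step : ∀ N m : ℕ, SN (N + (q*r) * m) q k r = SN N q k r := by
    intro N m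
    induction m with
    | zero => simp
    | succ m ih =>
        rw [show N + (q*r)*(m+1) = (N + (q*r)*m) + q*r by ring,
          SN_step q r hq hr hqr k, ih]
  rcases le_total N₁ N₂ with hle | hle
  · obtain ⟨m, hm⟩ := (Nat.modEq_iff_dvd' hle).mp h
    rw [show N₂ = N₁ + (q*r)*m by omega]
    exact (step N₁ m).symm
  · obtain ⟨m, hm⟩ := (Nat.modEq_iff_dvd' hle).mp h.symm
    rw [show N₁ = N₂ + (q*r)*m by omega]
    exact step N₂ m
end

section
/- Let q, r ∈ ℕ with gcd(q, r) = 1, q ≥ 2 and r ≥ 2, and let k ∈ ℤ_q^* (i.e. 1 ≤ k ≤ q and gcd(k, q) = 1). Then ∑_{N=1}^{qr} S_N(q,k;r) = − ∑_{N=1}^{qr} S_N(q, q−k; r). -/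
open Finset

lemma cop_sub (r j : ℕ) (hjr : j ≤ r) (hc : Nat.Coprime j r) : Nat.Coprime (r - j) r := by
  have h1 := Nat.gcd_sub_self_right (show r - j ≤ r by omega)
  rw [show r - (r - j) = j from by omega] at h1
  have h2 := Nat.gcd_sub_self_left hjr
  unfold Nat.Coprime at *
  rw [← h1, h2, Nat.gcd_comm]
  exact hc

lemma cq_add_mul (r : ℕ) (hr : r ≠ 0) (n t : ℤ) : cq r (n + r * t) = cq r n := by
  unfold cq
  refine Finset.sum_congr rfl (fun j hj => ?_)
  have hrC : (r : ℂ) ≠ 0 := Nat.cast_ne_zero.mpr hr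
  have harg : (2 * (Real.pi:ℂ) * Complex.I * j * ((n : ℂ) + r * t) / r)
      = 2 * Real.pi * Complex.I * j * n / r + ((j : ℤ) * t : ℤ) * (2 * Real.pi * Complex.I) := by
    push_cast
    field_simp
  rw [show ((n + (r:ℤ) * t : ℤ) : ℂ) = (n : ℂ) + r * t by push_cast; ring,
    harg, Complex.exp_add, Complex.exp_int_mul_two_pi_mul_I, mul_one]

lemma mem_aux (r : ℕ) (hr : 2 ≤ r) (j : ℕ)
    (hj : j ∈ (Finset.Icc 1 r).filter (fun j => Nat.Coprime j r)) :
    r - j ∈ (Finset.Icc 1 r).filter (fun j => Nat.Coprime j r) ∧ j < r := by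
  simp only [Finset.mem_filter, Finset.mem_Icc] at hj ⊢
  have hjr : j < r := by
    rcases lt_or_eq_of_le hj.1.2 with h | h
    · exact h
    · exfalso
      have := hj.2
      rw [h] at this
      simp [Nat.Coprime, Nat.gcd_self] at this
      omega
  exact ⟨⟨⟨by omega, by omega⟩, cop_sub r j hjr.le hj.2⟩, hjr⟩

lemma cq_neg (r : ℕ) (hr : 2 ≤ r) (n : ℤ) : cq r (-n) = cq r n := by
  unfold cq
  have hr0 : (r : ℂ) ≠ 0 := Nat.cast_ne_zero.mpr (by omega)
  refine Finset.sum_nbij' (fun j => r - j) (fun j => r - j)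
    (fun j hj => (mem_aux r hr j hj).1) (fun j hj => (mem_aux r hr j hj).1) ?_ ?_ ?_
  · intro j hj
    have := (mem_aux r hr j hj).2
    show r - (r - j) = j
    omega
  · intro j hj
    have := (mem_aux r hr j hj).2
    show r - (r - j) = j
    omega
  · intro j hj
    have hjr : j < r := (mem_aux r hr j hj).2
    have hcast : ((r - j : ℕ) : ℂ) = (r : ℂ) - (j : ℂ) := by
      push_cast [hjr.le]; ring
    show _ = Complex.exp (2 * Real.pi * Complex.I * ((r - j : ℕ) : ℂ) * n / r)
    rw [hcast]
    have harg : 2 * (Real.pi:ℂ) * Complex.I * ((r:ℂ) - j) * n / r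
        = 2 * Real.pi * Complex.I * j * (-(n:ℂ)) / r + (n : ℤ) * (2 * Real.pi * Complex.I) := by
      push_cast
      field_simp
      ring
    rw [show ((-n : ℤ) : ℂ) = -(n:ℂ) by push_cast; ring, harg, Complex.exp_add,
      Complex.exp_int_mul_two_pi_mul_I, mul_one]

lemma sum_cq_range (q r k : ℕ) (hr : 2 ≤ r) (hqr : Nat.Coprime q r) :
    ∑ j ∈ Finset.range r, cq r ((k + q * j : ℕ) : ℤ) = 0 := by
  have hr0 : (r : ℂ) ≠ 0 := Nat.cast_ne_zero.mpr (by omega)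
  unfold cq
  rw [Finset.sum_comm]
  refine Finset.sum_eq_zero (fun i hi => ?_)
  simp only [Finset.mem_filter, Finset.mem_Icc] at hi
  obtain ⟨⟨hi1, hir⟩, hco⟩ := hi
  have hiltr : i < r := by
    rcases lt_or_eq_of_le hir with h | h
    · exact h
    · exfalso
      rw [h] at hco
      simp [Nat.Coprime, Nat.gcd_self] at hco
      omega
  set z : ℂ := Complex.exp (2 * Real.pi * Complex.I * i * q / r) with hz
  have hterm : ∀ j ∈ Finset.range r,
      Complex.exp (2 * Real.pi * Complex.I * i * ((k + q * j : ℕ) : ℤ) / r)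
        = Complex.exp (2 * Real.pi * Complex.I * i * k / r) * z ^ j := by
    intro j hj
    rw [hz, ← Complex.exp_nat_mul, ← Complex.exp_add]
    congr 1
    push_cast
    field_simp
  rw [Finset.sum_congr rfl hterm, ← Finset.mul_sum]
  have hz1 : z ≠ 1 := by
    intro h
    rw [hz, Complex.exp_eq_one_iff] at h
    obtain ⟨m, hm⟩ := h
    have hpi : (Real.pi : ℂ) ≠ 0 := by
      exact_mod_cast Real.pi_ne_zero
    have hI : Complex.I ≠ 0 := Complex.I_ne_zero
    have hiq : (i : ℂ) * q = m * r := by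
      field_simp at hm
      have h2 : (2 * (Real.pi:ℂ) * Complex.I) * ((i:ℂ) * q)
          = (2 * (Real.pi:ℂ) * Complex.I) * ((m:ℂ) * r) := by linear_combination (2 * (Real.pi:ℂ) * Complex.I) * hm
      exact mul_left_cancel₀ (by simp [hpi, hI]) h2
    have hiqz : (i : ℤ) * q = m * r := by exact_mod_cast hiq
    have hdvd : (r : ℤ) ∣ (i : ℤ) * q := ⟨m, by linarith⟩
    have hdvd2 : (r : ℕ) ∣ i * q := by exact_mod_cast hdvd
    have : r ∣ i := (Nat.Coprime.dvd_of_dvd_mul_right (Nat.Coprime.symm hqr) hdvd2)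
    have := Nat.le_of_dvd (by omega) this
    omega
  have hzr : z ^ r = 1 := by
    rw [hz, ← Complex.exp_nat_mul]
    have : (r : ℂ) * (2 * Real.pi * Complex.I * i * q / r)
        = ((i * q : ℕ) : ℤ) * (2 * Real.pi * Complex.I) := by
      push_cast
      field_simp
    rw [this, Complex.exp_int_mul_two_pi_mul_I]
  rw [geom_sum_eq hz1, hzr, sub_self, zero_div, mul_zero]

lemma sum_cq_zero (q r k : ℕ) (hk1 : 1 ≤ k) (hk2 : k < q) (hr : 2 ≤ r)
    (hqr : Nat.Coprime q r) :
    ∑ n ∈ (Finset.Icc 1 (q * r)).filter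
        (fun n : ℕ => (n : ℤ) % (q : ℤ) = (k : ℤ) % (q : ℤ)), cq r n = 0 := by
  have hq0 : 0 < q := by omega
  have hkmod : (k : ℤ) % (q : ℤ) = (k : ℤ) :=
    Int.emod_eq_of_lt (by positivity) (by exact_mod_cast hk2)
  have hre : ∑ n ∈ (Finset.Icc 1 (q * r)).filter
        (fun n : ℕ => (n : ℤ) % (q : ℤ) = (k : ℤ) % (q : ℤ)), cq r n
      = ∑ j ∈ Finset.range r, cq r ((k + q * j : ℕ) : ℤ) := by
    refine Finset.sum_nbij' (fun n => (n - k) / q) (fun j => k + q * j) ?_ ?_ ?_ ?_ ?_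
    · intro n hn
      simp only [Finset.mem_filter, Finset.mem_Icc, hkmod] at hn
      obtain ⟨⟨hn1, hn2⟩, hmod⟩ := hn
      rw [Finset.mem_range, Nat.div_lt_iff_lt_mul hq0]
      have : r * q = q * r := Nat.mul_comm r q
      omega
    · intro j hj
      rw [Finset.mem_range] at hj
      simp only [Finset.mem_filter, Finset.mem_Icc]
      have h1 : q * (j + 1) ≤ q * r := Nat.mul_le_mul_left q (by omega)
      have h2 : q * (j + 1) = q * j + q := by ring
      refine ⟨⟨by omega, by omega⟩, ?_⟩
      push_cast
      rw [Int.add_mul_emod_self_left]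
    · intro n hn
      simp only [Finset.mem_filter, Finset.mem_Icc, hkmod] at hn
      obtain ⟨⟨hn1, hn2⟩, hmod⟩ := hn
      have hmodn : n % q = k := by exact_mod_cast hmod
      have hdm := Nat.div_add_mod n q
      have hdvd : q ∣ (n - k) := ⟨n / q, by omega⟩
      have h3 : q * ((n - k) / q) = n - k := Nat.mul_div_cancel' hdvd
      show k + q * ((n - k) / q) = n
      omega
    · intro j hj
      show (k + q * j - k) / q = j
      rw [Nat.add_sub_cancel_left, Nat.mul_div_cancel_left _ hq0]
    · intro n hn
      simp only [Finset.mem_filter, Finset.mem_Icc, hkmod] at hn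
      obtain ⟨⟨hn1, hn2⟩, hmod⟩ := hn
      have hmodn : n % q = k := by exact_mod_cast hmod
      have hdm := Nat.div_add_mod n q
      have hdvd : q ∣ (n - k) := ⟨n / q, by omega⟩
      have h3 : q * ((n - k) / q) = n - k := Nat.mul_div_cancel' hdvd
      have : k + q * ((n - k) / q) = n := by omega
      rw [this]
  rw [hre]
  exact sum_cq_range q r k hr hqr

lemma swap_lemma (M q : ℕ) (k' : ℤ) (r : ℕ) :
    ∑ N ∈ Finset.Icc 1 M, SN N q k' r
      = ∑ n ∈ (Finset.Icc 1 M).filter (fun n : ℕ => (n : ℤ) % (q:ℤ) = k' % (q:ℤ)),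
          ((M + 1 - n : ℕ) : ℂ) * cq r n := by
  unfold SN
  have step1 : ∀ N ∈ Finset.Icc 1 M,
      ∑ n ∈ (Finset.Icc 1 N).filter (fun n : ℕ => (n : ℤ) % (q:ℤ) = k' % (q:ℤ)), cq r n
        = ∑ n ∈ (Finset.Icc 1 M).filter (fun n : ℕ => (n : ℤ) % (q:ℤ) = k' % (q:ℤ)),
            if n ≤ N then cq r n else 0 := by
    intro N hN
    rw [Finset.mem_Icc] at hN
    rw [← Finset.sum_filter]
    congr 1
    ext n
    simp only [Finset.mem_filter, Finset.mem_Icc]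
    constructor
    · rintro ⟨⟨h1, h2⟩, hP⟩
      exact ⟨⟨⟨h1, h2.trans hN.2⟩, hP⟩, h2⟩
    · rintro ⟨⟨⟨h1, _⟩, hP⟩, h3⟩
      exact ⟨⟨h1, h3⟩, hP⟩
  rw [Finset.sum_congr rfl step1, Finset.sum_comm]
  refine Finset.sum_congr rfl (fun n hn => ?_)
  simp only [Finset.mem_filter, Finset.mem_Icc] at hn
  rw [← Finset.sum_filter]
  have hset : (Finset.Icc 1 M).filter (fun N => n ≤ N) = Finset.Icc n M := by
    ext N
    simp only [Finset.mem_filter, Finset.mem_Icc]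
    omega
  rw [hset, Finset.sum_const, Nat.card_Icc, nsmul_eq_mul]

lemma flip_lemma (q r k : ℕ) (hq : 2 ≤ q) (hr : 2 ≤ r) (hk1 : 1 ≤ k) (hk2 : k < q) :
    ∑ n ∈ (Finset.Icc 1 (q * r)).filter
        (fun n : ℕ => (n : ℤ) % (q:ℤ) = ((q:ℤ) - (k:ℤ)) % (q:ℤ)),
      ((q * r + 1 - n : ℕ) : ℂ) * cq r n
    = ∑ n ∈ (Finset.Icc 1 (q * r)).filter
        (fun n : ℕ => (n : ℤ) % (q:ℤ) = (k:ℤ) % (q:ℤ)),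
      ((n + 1 : ℕ) : ℂ) * cq r n := by
  have hq0 : (0:ℤ) < q := by exact_mod_cast (by omega : 0 < q)
  have hkq : ((q:ℤ) - k) % q = (q:ℤ) - k :=
    Int.emod_eq_of_lt (by push_cast; omega) (by push_cast; omega)
  have hkk : (k:ℤ) % q = (k:ℤ) :=
    Int.emod_eq_of_lt (by positivity) (by exact_mod_cast hk2)
  have hne : ∀ n : ℕ, n ∈ (Finset.Icc 1 (q * r)).filter
        (fun n : ℕ => (n : ℤ) % (q:ℤ) = ((q:ℤ) - (k:ℤ)) % (q:ℤ)) → 1 ≤ n ∧ n < q * r := by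
    intro n hn
    simp only [Finset.mem_filter, Finset.mem_Icc, hkq] at hn
    obtain ⟨⟨h1, h2⟩, hmod⟩ := hn
    refine ⟨h1, lt_of_le_of_ne h2 ?_⟩
    rintro rfl
    rw [show ((q * r : ℕ) : ℤ) = (q:ℤ) * r by push_cast; ring, Int.mul_emod_right] at hmod
    omega
  have hne2 : ∀ n : ℕ, n ∈ (Finset.Icc 1 (q * r)).filter
        (fun n : ℕ => (n : ℤ) % (q:ℤ) = (k:ℤ) % (q:ℤ)) → 1 ≤ n ∧ n < q * r := by
    intro n hn
    simp only [Finset.mem_filter, Finset.mem_Icc, hkk] at hn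
    obtain ⟨⟨h1, h2⟩, hmod⟩ := hn
    refine ⟨h1, lt_of_le_of_ne h2 ?_⟩
    rintro rfl
    rw [show ((q * r : ℕ) : ℤ) = (q:ℤ) * r by push_cast; ring, Int.mul_emod_right] at hmod
    omega
  have hcq : ∀ n : ℕ, 1 ≤ n → n < q * r → cq r ((q * r - n : ℕ) : ℤ) = cq r n := by
    intro n h1 h2
    have : ((q * r - n : ℕ) : ℤ) = -(n:ℤ) + (r:ℤ) * (q:ℤ) := by
      push_cast [le_of_lt h2]; ring
    rw [this, cq_add_mul r (by omega) _ _, cq_neg r hr]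
  refine Finset.sum_nbij' (fun n => q * r - n) (fun n => q * r - n) ?_ ?_ ?_ ?_ ?_
  · intro n hn
    obtain ⟨h1, h2⟩ := hne n hn
    simp only [Finset.mem_filter, Finset.mem_Icc, hkq] at hn
    simp only [Finset.mem_filter, Finset.mem_Icc, hkk]
    refine ⟨⟨by omega, by omega⟩, ?_⟩
    have hmod := hn.2
    calc ((q * r - n : ℕ) : ℤ) % q = ((q:ℤ) * r - n) % q := by
          congr 1; push_cast [le_of_lt h2]; ring
      _ = ((q:ℤ) * r - ((q:ℤ) - k)) % q :=
            Int.ModEq.sub (Int.ModEq.refl _) (show (n:ℤ) % q = ((q:ℤ)-k) % q by rw [hmod, hkq])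
      _ = ((k:ℤ) + (q:ℤ) * ((r:ℤ) - 1)) % q := by congr 1; ring
      _ = (k:ℤ) % q := by rw [Int.add_mul_emod_self_left]
      _ = (k:ℤ) := hkk
  · intro n hn
    obtain ⟨h1, h2⟩ := hne2 n hn
    simp only [Finset.mem_filter, Finset.mem_Icc, hkk] at hn
    simp only [Finset.mem_filter, Finset.mem_Icc, hkq]
    refine ⟨⟨by omega, by omega⟩, ?_⟩
    have hmod := hn.2
    calc ((q * r - n : ℕ) : ℤ) % q = ((q:ℤ) * r - n) % q := by
          congr 1; push_cast [le_of_lt h2]; ring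
      _ = ((q:ℤ) * r - k) % q :=
            Int.ModEq.sub (Int.ModEq.refl _) (show (n:ℤ) % q = (k:ℤ) % q by rw [hmod, hkk])
      _ = (((q:ℤ) - k) + (q:ℤ) * ((r:ℤ) - 1)) % q := by congr 1; ring
      _ = ((q:ℤ) - k) % q := by rw [Int.add_mul_emod_self_left]
      _ = (q:ℤ) - k := hkq
  · intro n hn
    obtain ⟨h1, h2⟩ := hne n hn
    show q * r - (q * r - n) = n
    omega
  · intro n hn
    obtain ⟨h1, h2⟩ := hne2 n hn
    show q * r - (q * r - n) = n
    omega
  · intro n hn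
    obtain ⟨h1, h2⟩ := hne n hn
    show ((q * r + 1 - n : ℕ) : ℂ) * cq r n = ((q * r - n + 1 : ℕ) : ℂ) * cq r ((q * r - n : ℕ) : ℤ)
    rw [hcq n h1 h2, show q * r - n + 1 = q * r + 1 - n by omega]


/-- for coprime `q, r ≥ 2` and `k ∈ ℤ_q^*`,
`∑_{N=1}^{qr} S_N(q,k;r) = -∑_{N=1}^{qr} S_N(q,q-k;r)`. -/
theorem stmt18 (q r : ℕ) (hq : 2 ≤ q) (hr : 2 ≤ r) (hqr : Nat.Coprime q r)
    (k : ℕ) (hk : k ∈ Zstar q) :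
    ∑ N ∈ Finset.Icc 1 (q * r), SN N q (k : ℤ) r =
      - ∑ N ∈ Finset.Icc 1 (q * r), SN N q ((q : ℤ) - (k : ℤ)) r := by
  simp only [Zstar, Finset.mem_filter, Finset.mem_Icc] at hk
  obtain ⟨⟨hk1, hkq⟩, hkcop⟩ := hk
  have hk2 : k < q := by
    rcases lt_or_eq_of_le hkq with h | h
    · exact h
    · exfalso
      rw [h] at hkcop
      simp [Nat.Coprime, Nat.gcd_self] at hkcop
      omega
  rw [swap_lemma, swap_lemma, flip_lemma q r k hq hr hk1 hk2,
    eq_neg_iff_add_eq_zero, ← Finset.sum_add_distrib]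
  have hco : ∀ n ∈ (Finset.Icc 1 (q * r)).filter
      (fun n : ℕ => (n:ℤ) % (q:ℤ) = (k:ℤ) % (q:ℤ)),
      ((q * r + 1 - n : ℕ) : ℂ) * cq r n + ((n + 1 : ℕ) : ℂ) * cq r n
        = ((q * r + 2 : ℕ) : ℂ) * cq r n := by
    intro n hn
    simp only [Finset.mem_filter, Finset.mem_Icc] at hn
    have h2 : n ≤ q * r := hn.1.2
    rw [← add_mul]
    congr 1
    push_cast [show n ≤ q * r + 1 by omega]
    ring
  rw [Finset.sum_congr rfl hco, ← Finset.mul_sum,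
    sum_cq_zero q r k hk1 hk2 hr hqr, mul_zero]
end

section
/- Let q, r ∈ ℕ with gcd(q, r) = 1, q ≥ 2 and r ≥ 2. Then ∑_{N=1}^{qr} ∑_{k ∈ ℤ_q^*} S_N(q,k;r) = 0; equivalently, ∑_{N=1}^{qr} ∑_{n ≤ N, gcd(n,q)=1} c_r(n) = 0. -/
open Finset

private lemma coprime_mod_iff (n q : ℕ) : Nat.Coprime (n % q) q ↔ Nat.Coprime n q := by
  rw [Nat.Coprime, Nat.Coprime, ← Nat.gcd_rec, Nat.gcd_comm]

private lemma coprime_reflect {q r n : ℕ} (hn : n ≤ q * r) :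
    Nat.Coprime (q * r - n) q ↔ Nat.Coprime n q := by
  rw [← Nat.isCoprime_iff_coprime, ← Nat.isCoprime_iff_coprime]
  have h : ((q * r - n : ℕ) : ℤ) = -(n : ℤ) + (q : ℤ) * r := by
    push_cast [hn]; ring
  rw [h]
  constructor
  · intro h'
    exact (IsCoprime.neg_left_iff _ _).mp h'.of_add_mul_left_left
  · intro h'
    exact ((IsCoprime.neg_left_iff (n : ℤ) (q : ℤ)).mpr h').add_mul_left_left r

private lemma mem_S {r j : ℕ} (hr : 2 ≤ r)
    (hj : j ∈ (Finset.Icc 1 r).filter (fun j => Nat.Coprime j r)) :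
    1 ≤ j ∧ j < r ∧ Nat.Coprime j r := by
  simp only [Finset.mem_filter, Finset.mem_Icc] at hj
  obtain ⟨⟨h1, h2⟩, h3⟩ := hj
  refine ⟨h1, ?_, h3⟩
  rcases lt_or_eq_of_le h2 with h | h
  · exact h
  · subst h; rw [Nat.coprime_self] at h3; omega

private lemma cq_reflect (r : ℕ) (hr : 2 ≤ r) (k m : ℤ) :
    cq r (k * r - m) = cq r m := by
  unfold cq
  have hr0 : (r : ℂ) ≠ 0 := Nat.cast_ne_zero.mpr (by omega)
  refine Finset.sum_nbij' (fun j => r - j) (fun j => r - j) ?_ ?_ ?_ ?_ ?_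
  · intro j hj
    obtain ⟨h1, h2, h3⟩ := mem_S hr hj
    simp only [Finset.mem_filter, Finset.mem_Icc]
    refine ⟨⟨by omega, by omega⟩, ?_⟩
    exact (Nat.coprime_self_sub_left (le_of_lt h2)).mpr h3
  · intro j hj
    obtain ⟨h1, h2, h3⟩ := mem_S hr hj
    simp only [Finset.mem_filter, Finset.mem_Icc]
    refine ⟨⟨by omega, by omega⟩, ?_⟩
    exact (Nat.coprime_self_sub_left (le_of_lt h2)).mpr h3
  · intro j hj
    obtain ⟨h1, h2, h3⟩ := mem_S hr hj
    show r - (r - j) = j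
    omega
  · intro j hj
    obtain ⟨h1, h2, h3⟩ := mem_S hr hj
    show r - (r - j) = j
    omega
  · intro j hj
    obtain ⟨h1, h2, h3⟩ := mem_S hr hj
    rw [Complex.exp_eq_exp_iff_exists_int]
    refine ⟨j * k - m, ?_⟩
    have hcast : ((r - j : ℕ) : ℂ) = (r : ℂ) - j := by
      push_cast [Nat.cast_sub (le_of_lt h2)]; ring
    rw [hcast]
    field_simp
    push_cast
    ring

private lemma zeta_pow (r j n : ℕ) :
    Complex.exp (2 * Real.pi * Complex.I * j * n / r)
      = (Complex.exp (2 * Real.pi * Complex.I * j / r)) ^ n := by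
  rw [← Complex.exp_nat_mul]
  ring_nf

private lemma geom_zero (q r : ℕ) (hq : 2 ≤ q) (hr : 2 ≤ r) (hqr : Nat.Coprime q r)
    (j : ℕ) (hj1 : 1 ≤ j) (hjr : j < r) (hjc : Nat.Coprime j r) :
    ∑ b ∈ Finset.range r,
      ((Complex.exp (2 * Real.pi * Complex.I * j / r)) ^ q) ^ b = 0 := by
  have hr0 : (r : ℂ) ≠ 0 := Nat.cast_ne_zero.mpr (by omega)
  set ζ : ℂ := Complex.exp (2 * Real.pi * Complex.I * j / r) with hζ
  have hne : ζ ^ q ≠ 1 := by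
    intro h
    rw [hζ, ← Complex.exp_nat_mul, Complex.exp_eq_one_iff] at h
    obtain ⟨m, hm⟩ := h
    have h2 : (2 : ℂ) * Real.pi * Complex.I ≠ 0 := by
      simp [Real.pi_ne_zero, Complex.I_ne_zero]
    have : (q : ℂ) * j = m * r := by
      field_simp at hm
      rw [hm]; ring
    have hint : ((q * j : ℕ) : ℤ) = m * r := by exact_mod_cast this
    have hdvd : (r : ℤ) ∣ ((q * j : ℕ) : ℤ) := ⟨m, by linarith [hint]⟩
    rw [Int.natCast_dvd_natCast] at hdvd
    have : r ∣ j := (Nat.Coprime.dvd_of_dvd_mul_left (Nat.coprime_comm.mp hqr) hdvd)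
    have := Nat.le_of_dvd (by omega) this
    omega
  have hpow : (ζ ^ q) ^ r = 1 := by
    rw [hζ, ← Complex.exp_nat_mul, ← Complex.exp_nat_mul]
    rw [show ((r : ℂ)) * ((q : ℂ) * (2 * Real.pi * Complex.I * j / r))
        = ((q * j : ℕ) : ℂ) * (2 * Real.pi * Complex.I) by push_cast; field_simp]
    exact_mod_cast Complex.exp_int_mul_two_pi_mul_I ((q * j : ℕ) : ℤ)
  rw [geom_sum_eq hne, hpow]
  simp

private lemma not_coprime_self_mul (q r : ℕ) (hq : 2 ≤ q) : ¬ Nat.Coprime (q * r) q := by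
  intro h
  have : Nat.Coprime q q := Nat.Coprime.coprime_dvd_left (Dvd.intro r rfl) h
  rw [Nat.coprime_self] at this
  omega

private lemma inner_sum_zero (q r : ℕ) (hq : 2 ≤ q) (hr : 2 ≤ r) (hqr : Nat.Coprime q r)
    (j : ℕ) (hj1 : 1 ≤ j) (hjr : j < r) (hjc : Nat.Coprime j r) :
    ∑ n ∈ Finset.Icc 1 (q * r),
      (if Nat.Coprime n q then Complex.exp (2 * Real.pi * Complex.I * j * n / r) else 0) = 0 := by
  set ζ : ℂ := Complex.exp (2 * Real.pi * Complex.I * j / r) with hζ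
  set g : ℕ → ℂ := fun n => if Nat.Coprime n q then ζ ^ n else 0 with hg
  have hterm : ∀ n : ℕ,
      (if Nat.Coprime n q then Complex.exp (2 * Real.pi * Complex.I * j * n / r) else 0) = g n := by
    intro n
    rw [hg]
    simp only [zeta_pow r j n]
    rfl
  simp only [hterm]
  have hg0 : g 0 = 0 := by
    have h0 : ¬ Nat.Coprime 0 q := by rw [Nat.coprime_zero_left]; omega
    rw [hg]; exact if_neg h0
  have hgP : g (q * r) = 0 := by
    rw [hg]; exact if_neg (not_coprime_self_mul q r hq)
  have h4 : 4 ≤ q * r := Nat.mul_le_mul hq hr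
  have hIcc : ∑ n ∈ Finset.Icc 1 (q * r), g n = ∑ n ∈ Finset.range (q * r), g n := by
    have e1 : Finset.Icc 1 (q * r) = Finset.Ico 1 (q * r + 1) := by
      rw [Finset.Ico_add_one_right_eq_Icc]
    have e2 : (q * r) = (q * r - 1) + 1 := by omega
    have e3 : ∑ n ∈ Finset.Ico 0 (q * r), g n = g 0 + ∑ n ∈ Finset.Ico (0 + 1) (q * r), g n :=
      Finset.sum_eq_sum_Ico_succ_bot (by omega) g
    rw [e1, e2, Finset.sum_Ico_succ_top (by omega), ← e2, hgP, add_zero]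
    rw [Finset.range_eq_Ico, e3, hg0, zero_add]
  rw [hIcc]
  have hfact : ∑ n ∈ Finset.range (q * r), g n
      = (∑ a ∈ Finset.range q, (if Nat.Coprime a q then ζ ^ a else 0))
        * (∑ b ∈ Finset.range r, (ζ ^ q) ^ b) := by
    rw [Finset.sum_mul_sum]
    rw [← Finset.sum_product']
    refine (Finset.sum_nbij' (fun p : ℕ × ℕ => p.1 + q * p.2) (fun n => (n % q, n / q))
      ?_ ?_ ?_ ?_ ?_).symm
    · intro p hp
      simp only [Finset.mem_product, Finset.mem_range] at hp
      rw [Finset.mem_range]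
      have := hp.1; have := hp.2
      nlinarith
    · intro n hn
      rw [Finset.mem_range] at hn
      simp only [Finset.mem_product, Finset.mem_range]
      constructor
      · exact Nat.mod_lt n (by omega)
      · exact Nat.div_lt_of_lt_mul (by omega)
    · intro p hp
      simp only [Finset.mem_product, Finset.mem_range] at hp
      show ((p.1 + q * p.2) % q, (p.1 + q * p.2) / q) = p
      have h1 : (p.1 + q * p.2) % q = p.1 := by
        rw [Nat.add_mul_mod_self_left, Nat.mod_eq_of_lt hp.1]
      have h2 : (p.1 + q * p.2) / q = p.2 := by
        rw [Nat.add_mul_div_left _ _ (by omega : 0 < q), Nat.div_eq_of_lt hp.1, zero_add]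
      rw [h1, h2]
    · intro n hn
      show n % q + q * (n / q) = n
      exact Nat.mod_add_div n q
    · intro p hp
      simp only [Finset.mem_product, Finset.mem_range] at hp
      show (if Nat.Coprime p.1 q then ζ ^ p.1 else 0) * (ζ ^ q) ^ p.2 = g (p.1 + q * p.2)
      rw [hg]
      simp only
      simp only [Nat.coprime_add_mul_left_left]
      by_cases h : Nat.Coprime p.1 q
      · rw [if_pos h, if_pos h, ← pow_mul, ← pow_add]
      · rw [if_neg h, if_neg h, zero_mul]
  rw [hfact, geom_zero q r hq hr hqr j hj1 hjr hjc, mul_zero]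

private lemma period_sum_zero (q r : ℕ) (hq : 2 ≤ q) (hr : 2 ≤ r) (hqr : Nat.Coprime q r) :
    ∑ n ∈ Finset.Icc 1 (q * r), (if Nat.Coprime n q then cq r (n : ℤ) else 0) = 0 := by
  have step1 : ∀ n : ℕ, (if Nat.Coprime n q then cq r (n : ℤ) else 0)
      = ∑ j ∈ (Finset.Icc 1 r).filter (fun j => Nat.Coprime j r),
          (if Nat.Coprime n q then Complex.exp (2 * Real.pi * Complex.I * j * n / r) else 0) := by
    intro n
    by_cases h : Nat.Coprime n q
    · simp only [if_pos h]
      unfold cq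
      push_cast
      rfl
    · simp only [if_neg h, Finset.sum_const_zero]
  simp only [step1]
  rw [Finset.sum_comm]
  apply Finset.sum_eq_zero
  intro j hj
  obtain ⟨h1, h2, h3⟩ := mem_S hr hj
  exact inner_sum_zero q r hq hr hqr j h1 h2 h3

private lemma triangle (P : ℕ) (F : ℕ → ℂ) :
    ∑ N ∈ Finset.Icc 1 P, ∑ n ∈ Finset.Icc 1 N, F n
      = ∑ n ∈ Finset.Icc 1 P, ((P : ℂ) + 1 - n) * F n := by
  have step1 : ∀ N ∈ Finset.Icc 1 P,
      ∑ n ∈ Finset.Icc 1 N, F n = ∑ n ∈ Finset.Icc 1 P, (if n ≤ N then F n else 0) := by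
    intro N hN
    rw [Finset.mem_Icc] at hN
    rw [← Finset.sum_filter]
    congr 1
    ext n
    simp only [Finset.mem_filter, Finset.mem_Icc]
    omega
  rw [Finset.sum_congr rfl step1, Finset.sum_comm]
  apply Finset.sum_congr rfl
  intro n hn
  rw [Finset.mem_Icc] at hn
  rw [← Finset.sum_filter]
  have hfil : (Finset.Icc 1 P).filter (fun N => n ≤ N) = Finset.Icc n P := by
    ext N
    simp only [Finset.mem_filter, Finset.mem_Icc]
    omega
  rw [hfil, Finset.sum_const, Nat.card_Icc, nsmul_eq_mul]
  congr 1
  push_cast [Nat.cast_sub (by omega : n ≤ P + 1)]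
  ring

private lemma mem_Zstar {q k : ℕ} (hq : 2 ≤ q) (hk : k ∈ Zstar q) :
    1 ≤ k ∧ k < q ∧ Nat.Coprime k q := by
  simp only [Zstar, Finset.mem_filter, Finset.mem_Icc] at hk
  obtain ⟨⟨h1, h2⟩, h3⟩ := hk
  refine ⟨h1, ?_, h3⟩
  rcases lt_or_eq_of_le h2 with h | h
  · exact h
  · subst h; rw [Nat.coprime_self] at h3; omega

private lemma zstar_ite_sum (q r : ℕ) (hq : 2 ≤ q) (n : ℕ) :
    ∑ k ∈ Zstar q, (if (n : ℤ) % (q : ℤ) = (k : ℤ) % (q : ℤ) then cq r (n : ℤ) else 0)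
      = if Nat.Coprime n q then cq r (n : ℤ) else 0 := by
  have hcond : ∀ k ∈ Zstar q, ((n : ℤ) % (q : ℤ) = (k : ℤ) % (q : ℤ) ↔ n % q = k) := by
    intro k hk
    obtain ⟨h1, h2, h3⟩ := mem_Zstar hq hk
    have e1 : (k : ℤ) % (q : ℤ) = (k : ℤ) :=
      Int.emod_eq_of_lt (by positivity) (by exact_mod_cast h2)
    have e2 : (n : ℤ) % (q : ℤ) = ((n % q : ℕ) : ℤ) := by push_cast; ring
    rw [e1, e2, Int.natCast_inj]
  by_cases hc : Nat.Coprime n q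
  · rw [if_pos hc]
    have hmem : n % q ∈ Zstar q := by
      simp only [Zstar, Finset.mem_filter, Finset.mem_Icc]
      have hco : Nat.Coprime (n % q) q := (coprime_mod_iff n q).mpr hc
      have hlt : n % q < q := Nat.mod_lt n (by omega)
      have hne : n % q ≠ 0 := by
        intro h
        rw [h, Nat.coprime_zero_left] at hco
        omega
      exact ⟨⟨by omega, by omega⟩, hco⟩
    rw [Finset.sum_eq_single_of_mem (n % q) hmem]
    · rw [if_pos ((hcond _ hmem).mpr rfl)]
    · intro b hb hbn
      rw [if_neg]
      intro h
      exact hbn ((hcond b hb).mp h).symm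
  · rw [if_neg hc]
    apply Finset.sum_eq_zero
    intro k hk
    rw [if_neg]
    intro h
    have hkn := (hcond k hk).mp h
    obtain ⟨h1, h2, h3⟩ := mem_Zstar hq hk
    rw [← hkn] at h3
    exact hc ((coprime_mod_iff n q).mp h3)

private lemma part1_inner (q r N : ℕ) (hq : 2 ≤ q) :
    ∑ k ∈ Zstar q, SN N q (k : ℤ) r
      = ∑ n ∈ (Finset.Icc 1 N).filter (fun n => Nat.Coprime n q), cq r (n : ℤ) := by
  have lhs : ∑ k ∈ Zstar q, SN N q (k : ℤ) r
      = ∑ n ∈ Finset.Icc 1 N, ∑ k ∈ Zstar q,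
          (if (n : ℤ) % (q : ℤ) = (k : ℤ) % (q : ℤ) then cq r (n : ℤ) else 0) := by
    rw [← Finset.sum_comm]
    apply Finset.sum_congr rfl
    intro k _
    unfold SN
    rw [Finset.sum_filter]
  rw [lhs, Finset.sum_filter]
  apply Finset.sum_congr rfl
  intro n _
  exact zstar_ite_sum q r hq n


/-- for coprime `q, r ≥ 2`,
`∑_{N=1}^{qr} ∑_{k ∈ ℤ_q^*} S_N(q,k;r) = 0`; equivalently
`∑_{N=1}^{qr} ∑_{n ≤ N, (n,q)=1} c_r(n) = 0`. -/
theorem stmt19 (q r : ℕ) (hq : 2 ≤ q) (hr : 2 ≤ r) (hqr : Nat.Coprime q r) :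
    (∑ N ∈ Finset.Icc 1 (q * r), ∑ k ∈ Zstar q, SN N q (k : ℤ) r = 0) ∧
    (∑ N ∈ Finset.Icc 1 (q * r),
      ∑ n ∈ (Finset.Icc 1 N).filter (fun n => Nat.Coprime n q), cq r (n : ℤ) = 0) := by
  obtain ⟨P, hP⟩ : ∃ P : ℕ, P = q * r := ⟨q * r, rfl⟩
  have hP4 : 4 ≤ P := hP ▸ Nat.mul_le_mul hq hr
  rw [← hP]
  set F : ℕ → ℂ := fun n => if Nat.Coprime n q then cq r (n : ℤ) else 0 with hF
  have S0 : ∑ n ∈ Finset.Icc 1 P, F n = 0 := by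
    rw [hP]; exact period_sum_zero q r hq hr hqr
  have FP : F P = 0 := by
    rw [hF, hP]; exact if_neg (not_coprime_self_mul q r hq)
  have hsplit : ∀ G : ℕ → ℂ, ∑ n ∈ Finset.Icc 1 P, G n
      = (∑ n ∈ Finset.Icc 1 (P - 1), G n) + G P := by
    intro G
    rw [show P = (P - 1) + 1 by omega, Finset.sum_Icc_succ_top (by omega)]
    congr 2 <;> omega
  have S0' : ∑ n ∈ Finset.Icc 1 (P - 1), F n = 0 := by
    rw [hsplit F, FP, add_zero] at S0
    exact S0
  have hFrefl : ∀ n, 1 ≤ n → n ≤ P - 1 → F (P - n) = F n := by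
    intro n h1 h2
    have hnP : n ≤ P := by omega
    have hco := coprime_reflect (q := q) (r := r) (n := n) (hP ▸ hnP)
    have hcast : ((P - n : ℕ) : ℤ) = (q : ℤ) * r - (n : ℤ) := by
      rw [Nat.cast_sub hnP, hP]; push_cast; ring
    have hcq : cq r ((P - n : ℕ) : ℤ) = cq r (n : ℤ) := by
      rw [hcast]; exact cq_reflect r hr q n
    simp only [hF]
    have hco' : Nat.Coprime (P - n) q ↔ Nat.Coprime n q := by rw [hP]; exact hco
    by_cases h : Nat.Coprime n q
    · rw [if_pos h, if_pos (hco'.mpr h), hcq]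
    · rw [if_neg h, if_neg (fun hh => h (hco'.mp hh))]
  have Srefl : ∑ n ∈ Finset.Icc 1 (P - 1), (n : ℂ) * F n
      = ∑ n ∈ Finset.Icc 1 (P - 1), ((P : ℂ) - n) * F n := by
    refine Finset.sum_nbij' (fun n => P - n) (fun n => P - n) ?_ ?_ ?_ ?_ ?_
    · intro n hn
      show (P - n) ∈ Finset.Icc 1 (P - 1)
      rw [Finset.mem_Icc] at hn ⊢; omega
    · intro n hn
      show (P - n) ∈ Finset.Icc 1 (P - 1)
      rw [Finset.mem_Icc] at hn ⊢; omega
    · intro n hn; rw [Finset.mem_Icc] at hn; show P - (P - n) = n; omega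
    · intro n hn; rw [Finset.mem_Icc] at hn; show P - (P - n) = n; omega
    · intro n hn
      rw [Finset.mem_Icc] at hn
      show (n : ℂ) * F n = ((P : ℂ) - ((P - n : ℕ) : ℂ)) * F (P - n)
      rw [hFrefl n hn.1 hn.2]
      congr 1
      have : ((P - n : ℕ) : ℂ) = (P : ℂ) - n := by push_cast [show n ≤ P by omega]; ring
      rw [this]; ring
  have Sn' : ∑ n ∈ Finset.Icc 1 (P - 1), (n : ℂ) * F n = 0 := by
    have hsum : (∑ n ∈ Finset.Icc 1 (P - 1), (n : ℂ) * F n)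
        + (∑ n ∈ Finset.Icc 1 (P - 1), ((P : ℂ) - n) * F n)
        = (P : ℂ) * ∑ n ∈ Finset.Icc 1 (P - 1), F n := by
      rw [← Finset.sum_add_distrib, Finset.mul_sum]
      apply Finset.sum_congr rfl
      intro n _
      ring
    rw [← Srefl, S0', mul_zero] at hsum
    exact add_self_eq_zero.mp hsum
  have SnP : ∑ n ∈ Finset.Icc 1 P, (n : ℂ) * F n = 0 := by
    rw [hsplit (fun n => (n : ℂ) * F n)]
    simp only [FP, mul_zero, add_zero]
    exact Sn'
  have hpart2 : ∑ N ∈ Finset.Icc 1 P,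
      ∑ n ∈ (Finset.Icc 1 N).filter (fun n => Nat.Coprime n q), cq r (n : ℤ) = 0 := by
    have e : ∀ N ∈ Finset.Icc 1 P,
        ∑ n ∈ (Finset.Icc 1 N).filter (fun n => Nat.Coprime n q), cq r (n : ℤ)
          = ∑ n ∈ Finset.Icc 1 N, F n := by
      intro N _
      rw [Finset.sum_filter]
    rw [Finset.sum_congr rfl e, triangle P F]
    have e2 : ∑ n ∈ Finset.Icc 1 P, ((P : ℂ) + 1 - n) * F n
        = ((P : ℂ) + 1) * (∑ n ∈ Finset.Icc 1 P, F n)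
          - ∑ n ∈ Finset.Icc 1 P, (n : ℂ) * F n := by
      rw [Finset.mul_sum, ← Finset.sum_sub_distrib]
      apply Finset.sum_congr rfl
      intro n _
      ring
    rw [e2, S0, SnP, mul_zero, sub_zero]
  constructor
  · rw [Finset.sum_congr rfl (fun N _ => part1_inner q r N hq)]
    exact hpart2
  · exact hpart2
end
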